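/- Let H be a normal subgroup of π₁(X,x₀) and X a locally path connected strong H-SLT space at x₀. Then H is closed in the whisker topology on π₁(X,x₀) if and only if H is closed in the lasso topology on π₁(X,x₀). -/

import Mathlib

open CategoryTheory unitInterval
open scoped Topology

attribute [local instance] Path.Homotopic.setoid

noncomputable section

/-- The homotopy class of a loop as an element of the fundamental group. -/
def loopClass {X : Type*} [TopologicalSpace X] {x : X} (γ : Path x x) :
    FundamentalGroup X x :=
  FundamentalGroup.fromPath (⟦γ⟧ : Path.Homotopic.Quotient x x)

variable {X : Type*} [TopologicalSpace X]

/-- The Spanier group of a family of subsets of `X`, based at `x`: the subgroup generated by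
classes `[α∗β∗α⁻¹]` where `α` is a path from `x` and `β` is a loop inside a member of `𝒰`. -/
def spanierGroupAt (x : X) (𝒰 : Set (Set X)) : Subgroup (FundamentalGroup X x) :=
  Subgroup.closure {g | ∃ (y : X) (α : Path x y) (β : Path y y) (U : Set X),
    U ∈ 𝒰 ∧ (∀ t, β t ∈ U) ∧ g = loopClass (α.trans (β.trans α.symm))}

/-- `𝒰` is an open cover of `X`. -/
def IsOpenCover (𝒰 : Set (Set X)) : Prop := (∀ U ∈ 𝒰, IsOpen U) ∧ ⋃₀ 𝒰 = Set.univ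

/-- `X` is a strong `H`-SLT space at `x₀`: for every `x ∈ X` and every open neighborhood `U`
of `x₀` there is an open neighborhood `V` of `x` such that for every loop `β` in `V` based at
`x` and every path `α` from `x₀` to `x` there is a loop `λ` in `U` based at `x₀` with
`[α∗β∗α⁻¹∗λ⁻¹] ∈ H`. -/
def StrongHSLTAt (x₀ : X) (H : Subgroup (FundamentalGroup X x₀)) : Prop :=
  ∀ (x : X) (U : Set X), IsOpen U → x₀ ∈ U →
    ∃ V : Set X, IsOpen V ∧ x ∈ V ∧
      ∀ (β : Path x x), (∀ t, β t ∈ V) → ∀ (α : Path x₀ x),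
        ∃ lam : Path x₀ x₀, (∀ t, lam t ∈ U) ∧
          loopClass (α.trans (β.trans α.symm)) * (loopClass lam)⁻¹ ∈ H

/-- The whisker topology on the fundamental group at `x₀`: the subspace topology inherited
from the whisker topology on the universal path space. -/
def whiskerPi1 (x₀ : X) : TopologicalSpace (FundamentalGroup X x₀) :=
  TopologicalSpace.generateFrom
    {S | ∃ (x : X) (α : Path x₀ x) (U : Set X), IsOpen U ∧ x ∈ U ∧
      S = {g | ∃ lam : Path x x₀, (∀ t, lam t ∈ U) ∧ g = loopClass (α.trans lam)}}

/-- The lasso topology on the fundamental group at `x₀`: the subspace topology inherited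
from the lasso topology on the universal path space. -/
def lassoPi1 (x₀ : X) : TopologicalSpace (FundamentalGroup X x₀) :=
  TopologicalSpace.generateFrom
    {S | ∃ (x : X) (α : Path x₀ x) (𝒰 : Set (Set X)) (U : Set X),
      IsOpenCover 𝒰 ∧ U ∈ 𝒰 ∧ x ∈ U ∧
      S = {g | ∃ (γ : Path x x) (δ : Path x x₀), loopClass γ ∈ spanierGroupAt x 𝒰 ∧
            (∀ t, δ t ∈ U) ∧ g = loopClass ((α.trans γ).trans δ)}}

/-! ### Auxiliary lemmas -/

/-- A path class as a morphism in the fundamental groupoid. -/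
def hq {x y : X} (p : Path x y) : FundamentalGroupoid.mk x ⟶ FundamentalGroupoid.mk y :=
  (⟦p⟧ : Path.Homotopic.Quotient x y)

lemma hq_sound {x y : X} {p q : Path x y} (h : p.Homotopic q) : hq p = hq q :=
  Quotient.sound h

@[simp] lemma hq_trans {x y z : X} (p : Path x y) (q : Path y z) :
    hq (p.trans q) = hq p ≫ hq q :=
  rfl

@[simp] lemma hq_refl (x : X) : hq (Path.refl x) = 𝟙 (FundamentalGroupoid.mk x) := rfl

@[simp] lemma hq_symm_comp {x y : X} (p : Path x y) :
    hq p.symm ≫ hq p = 𝟙 (FundamentalGroupoid.mk y) := by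
  rw [← hq_trans]
  exact hq_sound ⟨(Path.Homotopy.reflSymmTrans p).symm⟩

@[simp] lemma hq_comp_symm {x y : X} (p : Path x y) :
    hq p ≫ hq p.symm = 𝟙 (FundamentalGroupoid.mk x) := by
  rw [← hq_trans]
  exact hq_sound ⟨(Path.Homotopy.reflTransSymm p).symm⟩

@[simp] lemma hq_symm_comp_assoc {x y : X} (p : Path x y) {Z : FundamentalGroupoid X}
    (f : FundamentalGroupoid.mk y ⟶ Z) : hq p.symm ≫ (hq p ≫ f) = f := by
  rw [← Category.assoc, hq_symm_comp, Category.id_comp]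

@[simp] lemma hq_comp_symm_assoc {x y : X} (p : Path x y) {Z : FundamentalGroupoid X}
    (f : FundamentalGroupoid.mk x ⟶ Z) : hq p ≫ (hq p.symm ≫ f) = f := by
  rw [← Category.assoc, hq_comp_symm, Category.id_comp]

lemma loopClass_hom {x : X} (γ : Path x x) : loopClass γ = hq γ := rfl

lemma loopClass_eq_of_hq {x : X} {γ δ : Path x x} (h : hq γ = hq δ) :
    loopClass γ = loopClass δ :=
  h

lemma loopClass_sound {x : X} {γ δ : Path x x} (h : γ.Homotopic δ) :
    loopClass γ = loopClass δ :=
  loopClass_eq_of_hq (hq_sound h)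

lemma loopClass_mul {x : X} (p q : Path x x) :
    loopClass p * loopClass q = loopClass (q.trans p) := by
  show hq q ≫ hq p = hq (q.trans p)
  rw [hq_trans]

lemma loopClass_one {x : X} : loopClass (Path.refl x) = (1 : FundamentalGroup X x) := by
  rfl

lemma loopClass_inv {x : X} (p : Path x x) : (loopClass p)⁻¹ = loopClass p.symm := by
  rw [inv_eq_iff_mul_eq_one, loopClass_mul, ← loopClass_one]
  exact loopClass_sound ⟨(Path.Homotopy.reflSymmTrans p).symm⟩

lemma loopClass_surjective {x : X} (g : FundamentalGroup X x) : ∃ γ : Path x x, loopClass γ = g := by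
  obtain ⟨γ, hγ⟩ := Quotient.exists_rep g
  exact ⟨γ, hγ⟩

lemma mem_of_trans {x y z : X} {U : Set X} {p : Path x y} {q : Path y z}
    (hp : ∀ t, p t ∈ U) (hq : ∀ t, q t ∈ U) : ∀ t, (p.trans q) t ∈ U := by
  intro t
  have : (p.trans q) t ∈ Set.range (p.trans q) := Set.mem_range_self t
  rw [Path.trans_range] at this
  rcases this with ⟨s, hs⟩ | ⟨s, hs⟩
  · exact hs ▸ hp s
  · exact hs ▸ hq s

lemma mem_of_symm {x y : X} {U : Set X} {p : Path x y} (hp : ∀ t, p t ∈ U) :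
    ∀ t, p.symm t ∈ U := by
  intro t
  have : p.symm t ∈ Set.range p.symm := Set.mem_range_self t
  rw [Path.symm_range] at this
  rcases this with ⟨s, hs⟩
  exact hs ▸ hp s

/-- A set is open in a generated topology if every point has a generating set around it. -/
lemma generateOpen_of_basic {α : Type*} {gens : Set (Set α)} {S : Set α}
    (h : ∀ g ∈ S, ∃ B ∈ gens, g ∈ B ∧ B ⊆ S) :
    TopologicalSpace.GenerateOpen gens S := by
  have : S = ⋃₀ {B | B ∈ gens ∧ B ⊆ S} := by
    apply Set.Subset.antisymm
    · intro g hg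
      obtain ⟨B, hB, hgB, hBS⟩ := h g hg
      exact ⟨B, ⟨hB, hBS⟩, hgB⟩
    · intro g ⟨B, ⟨_, hBS⟩, hgB⟩
      exact hBS hgB
  rw [this]
  exact .sUnion _ fun B hB => .basic B hB.1

/-- Key property of the whisker topology: every open set containing `g` contains a whole
basic neighborhood `g ⋅ π(W, x₀)`. -/
lemma whisker_nbhd {x₀ : X} {S : Set (FundamentalGroup X x₀)}
    (hS : IsOpen[whiskerPi1 x₀] S) :
    ∀ g ∈ S, ∃ W : Set X, IsOpen W ∧ x₀ ∈ W ∧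
      ∀ μ : Path x₀ x₀, (∀ t, μ t ∈ W) → loopClass μ * g ∈ S := by
  induction hS with
  | basic B hB =>
    obtain ⟨x, α, U, hUo, _, rfl⟩ := hB
    rintro g ⟨lam, hlam, rfl⟩
    refine ⟨U, hUo, by simpa using hlam 1, fun μ hμ => ?_⟩
    refine ⟨lam.trans μ, mem_of_trans hlam hμ, ?_⟩
    rw [loopClass_mul]
    exact loopClass_eq_of_hq (by simp)
  | univ => exact fun g _ => ⟨Set.univ, isOpen_univ, trivial, fun _ _ => trivial⟩
  | inter S₁ S₂ _ _ ih₁ ih₂ =>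
    rintro g ⟨hg₁, hg₂⟩
    obtain ⟨W₁, hW₁o, hW₁x, h₁⟩ := ih₁ g hg₁
    obtain ⟨W₂, hW₂o, hW₂x, h₂⟩ := ih₂ g hg₂
    exact ⟨W₁ ∩ W₂, hW₁o.inter hW₂o, ⟨hW₁x, hW₂x⟩,
      fun μ hμ => ⟨h₁ μ (fun t => (hμ t).1), h₂ μ (fun t => (hμ t).2)⟩⟩
  | sUnion 𝒮 _ ih =>
    rintro g ⟨T, hT, hgT⟩
    obtain ⟨W, hWo, hWx, h⟩ := ih T hT g hgT
    exact ⟨W, hWo, hWx, fun μ hμ => ⟨T, hT, h μ hμ⟩⟩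

theorem whisker_closed_iff_lasso_closed [LocallyPathConnectedSpace X]
    (x₀ : X) (H : Subgroup (FundamentalGroup X x₀)) (hN : H.Normal)
    (hSLT : StrongHSLTAt x₀ H) :
    IsClosed[whiskerPi1 x₀] (H : Set (FundamentalGroup X x₀)) ↔
      IsClosed[lassoPi1 x₀] (H : Set (FundamentalGroup X x₀)) := by
  constructor
  · -- hard direction: whisker closed → lasso closed
    intro hW
    rw [← @isOpen_compl_iff] at hW ⊢
    apply generateOpen_of_basic
    intro g hg
    -- whisker basic neighborhood of g missing H
    obtain ⟨W, hWo, hWx₀, hgood⟩ := whisker_nbhd hW g hg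
    obtain ⟨γg, hγg⟩ := loopClass_surjective g
    -- the SLT neighborhoods
    choose V hVo hVmem hVprop using fun y => hSLT y W hWo hWx₀
    set V' : X → Set X := fun y => pathComponentIn (V y) y with hV'
    have hV'o : ∀ y, IsOpen (V' y) := fun y => (hVo y).pathComponentIn y
    have hV'mem : ∀ y, y ∈ V' y := fun y => mem_pathComponentIn_self (hVmem y)
    have hV'sub : ∀ y, V' y ⊆ V y := fun y => pathComponentIn_subset
    have hV'pc : ∀ y, IsPathConnected (V' y) := fun y =>
      isPathConnected_pathComponentIn (hVmem y)
    set 𝒰 : Set (Set X) := Set.range V' with h𝒰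
    have hcover : IsOpenCover 𝒰 := by
      constructor
      · rintro U ⟨y, rfl⟩; exact hV'o y
      · apply Set.eq_univ_of_forall
        intro y
        exact ⟨V' y, ⟨y, rfl⟩, hV'mem y⟩
    -- every element of the Spanier group is (mod H) the class of a loop in W
    have hspan : ∀ s ∈ spanierGroupAt x₀ 𝒰, ∃ (lam : Path x₀ x₀) (h : FundamentalGroup X x₀),
        (∀ t, lam t ∈ W) ∧ h ∈ H ∧ s = h * loopClass lam := by
      intro s hs
      induction hs using Subgroup.closure_induction with
      | mem s hs =>
        obtain ⟨z, α, β, U, ⟨y, rfl⟩, hβ, rfl⟩ := hs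
        have hzV : z ∈ V' y := by simpa using hβ 0
        obtain ⟨p, hp⟩ := (hV'pc y).joinedIn y (hV'mem y) z hzV
        set β' : Path y y := p.trans (β.trans p.symm) with hβ'
        have hβ'V : ∀ t, β' t ∈ V y := fun t =>
          hV'sub y (mem_of_trans hp (mem_of_trans hβ (mem_of_symm hp)) t)
        obtain ⟨lam, hlamW, hlamH⟩ := hVprop y β' hβ'V (α.trans p.symm)
        have key : loopClass ((α.trans p.symm).trans (β'.trans (α.trans p.symm).symm)) =
            loopClass (α.trans (β.trans α.symm)) := by
          apply loopClass_eq_of_hq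
          simp [hβ', Path.trans_symm, Path.symm_symm, Category.assoc]
        rw [key] at hlamH
        refine ⟨lam, loopClass (α.trans (β.trans α.symm)) * (loopClass lam)⁻¹, hlamW, hlamH, ?_⟩
        group
      | one =>
        exact ⟨Path.refl x₀, 1, fun t => by simpa using hWx₀, one_mem _, by
          rw [loopClass_one, one_mul]⟩
      | mul a b _ _ iha ihb =>
        obtain ⟨l₁, h₁, hl₁, hh₁, rfl⟩ := iha
        obtain ⟨l₂, h₂, hl₂, hh₂, rfl⟩ := ihb
        refine ⟨l₂.trans l₁, h₁ * (loopClass l₁ * h₂ * (loopClass l₁)⁻¹),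
          mem_of_trans hl₂ hl₁, mul_mem hh₁ (hN.conj_mem _ hh₂ _), ?_⟩
        rw [← loopClass_mul]
        group
      | inv a _ iha =>
        obtain ⟨l, h, hl, hh, rfl⟩ := iha
        refine ⟨l.symm, (loopClass l)⁻¹ * h⁻¹ * loopClass l,
          mem_of_symm hl, ?_, ?_⟩
        · have := hN.conj_mem _ (inv_mem hh) (loopClass l)⁻¹
          simpa using this
        · rw [← loopClass_inv]
          group
    -- the lasso basic neighborhood
    refine ⟨{g' | ∃ (γ : Path x₀ x₀) (δ : Path x₀ x₀), loopClass γ ∈ spanierGroupAt x₀ 𝒰 ∧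
        (∀ t, δ t ∈ V' x₀) ∧ g' = loopClass ((γg.trans γ).trans δ)},
      ⟨x₀, γg, 𝒰, V' x₀, hcover, ⟨x₀, rfl⟩, hV'mem x₀, rfl⟩, ?_, ?_⟩
    · -- g is in it
      refine ⟨Path.refl x₀, Path.refl x₀, by rw [loopClass_one]; exact one_mem _,
        fun t => by simpa using hV'mem x₀, ?_⟩
      rw [← hγg]
      exact (loopClass_eq_of_hq (by simp)).symm
    · -- it avoids H
      rintro b ⟨γ, δ, hγ, hδ, rfl⟩ hbH
      -- loopClass δ is in the Spanier group
      have hδspan : loopClass δ ∈ spanierGroupAt x₀ 𝒰 := by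
        have : loopClass ((Path.refl x₀).trans (δ.trans (Path.refl x₀).symm)) = loopClass δ :=
          loopClass_eq_of_hq (by simp [Path.refl_symm])
        rw [← this]
        exact Subgroup.subset_closure ⟨x₀, Path.refl x₀, δ, V' x₀, ⟨x₀, rfl⟩, hδ, rfl⟩
      have hprod : loopClass δ * loopClass γ ∈ spanierGroupAt x₀ 𝒰 := mul_mem hδspan hγ
      obtain ⟨lam, h, hlamW, hhH, heq⟩ := hspan _ hprod
      have hb : loopClass ((γg.trans γ).trans δ) = h * (loopClass lam * g) := by
        rw [← hγg, ← loopClass_mul, ← loopClass_mul, ← mul_assoc, heq, mul_assoc]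
      rw [hb] at hbH
      exact hgood lam hlamW ((Subgroup.mul_mem_cancel_left H hhH).mp hbH)
  · -- easy direction: lasso closed → whisker closed
    intro hL
    rw [← @isOpen_compl_iff] at hL ⊢
    have hle : whiskerPi1 x₀ ≤ lassoPi1 x₀ := by
      apply le_generateFrom
      rintro S ⟨x, α, 𝒰, U, hcov, hU𝒰, hxU, rfl⟩
      apply generateOpen_of_basic
      rintro g ⟨γ, δ, hγ, hδ, rfl⟩
      refine ⟨{g' | ∃ lam : Path x x₀, (∀ t, lam t ∈ U) ∧
          g' = loopClass ((α.trans γ).trans lam)},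
        ⟨x, α.trans γ, U, hcov.1 U hU𝒰, hxU, rfl⟩, ⟨δ, hδ, rfl⟩, ?_⟩
      rintro g' ⟨lam, hlam, rfl⟩
      exact ⟨γ, lam, hγ, hlam, rfl⟩
    exact hL.mono hle

end
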